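/- Let n ≥ 1 be an integer, T ∈ (0, ∞], and let a, R : [0, T) → ℝ be functions with R(t) > 0 and a(t) ≠ 0 for all t, such that for every t ∈ [0, T), a has derivative a′(t) = −n(n+2)/R(t)³ and R has derivative R′(t) = −n(n−4)/(R(t)² a(t)). Then a(t) R(t)³ = a(0) R(0)³ − n(4n−10) t for all t ∈ [0, T). -/

import Mathlib

open scoped ENNReal

/-- First integral of the ODE system for the evolution of `a(t) 1_{B_{R(t)}}` under the
fourth-order total variation flow: `a R³` is affine in time.
Here `T ∈ (0,∞]` is encoded as `T : ℝ≥0∞` with `0 < T`, and the domain `[0,T)` is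
`D = {t : ℝ | 0 ≤ t ∧ ofReal t < T}`. -/
theorem stmt_12 (n : ℕ) (hn : 1 ≤ n) (T : ℝ≥0∞) (hT : 0 < T)
    (D : Set ℝ) (hD : D = {t : ℝ | 0 ≤ t ∧ ENNReal.ofReal t < T})
    (a R : ℝ → ℝ)
    (hRpos : ∀ t ∈ D, 0 < R t) (hane : ∀ t ∈ D, a t ≠ 0)
    (ha : ∀ t ∈ D, HasDerivWithinAt a (-((n : ℝ) * ((n : ℝ) + 2)) / R t ^ 3) D t)
    (hR : ∀ t ∈ D,
      HasDerivWithinAt R (-((n : ℝ) * ((n : ℝ) - 4)) / (R t ^ 2 * a t)) D t) :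
    ∀ t ∈ D, a t * R t ^ 3 = a 0 * R 0 ^ 3 - (n : ℝ) * (4 * (n : ℝ) - 10) * t := by
  intro t ht
  set c : ℝ := (n : ℝ) * (4 * (n : ℝ) - 10) with hc
  set f : ℝ → ℝ := fun s => a s * R s ^ 3 + c * s with hf
  have h0 : (0 : ℝ) ∈ D := by
    rw [hD]; exact ⟨le_refl 0, by simpa using hT⟩
  have hconv : Convex ℝ D := by
    rw [hD]
    intro x hx y hy s u hs hu hsu
    constructor
    · have := add_nonneg (mul_nonneg hs hx.1) (mul_nonneg hu hy.1)
      simpa using this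
    · have hle : s * x + u * y ≤ max x y := by
        calc s * x + u * y ≤ s * max x y + u * max x y := by
              gcongr
              · exact le_max_left x y
              · exact le_max_right x y
          _ = max x y := by rw [← add_mul, hsu, one_mul]
      calc ENNReal.ofReal (s * x + u * y) ≤ ENNReal.ofReal (max x y) :=
            ENNReal.ofReal_le_ofReal hle
        _ < T := by
            rcases max_cases x y with ⟨h, _⟩ | ⟨h, _⟩
            · rw [h]; exact hx.2
            · rw [h]; exact hy.2
  have hderiv : ∀ s ∈ D, HasDerivWithinAt f 0 D s := by
    intro s hs
    have hR0 : R s ≠ 0 := (hRpos s hs).ne'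
    have ha0 : a s ≠ 0 := hane s hs
    have h1 : HasDerivWithinAt (fun u => a u * R u ^ 3)
        (-((n : ℝ) * ((n : ℝ) + 2)) / R s ^ 3 * R s ^ 3 +
          a s * (3 * R s ^ 2 * (-((n : ℝ) * ((n : ℝ) - 4)) / (R s ^ 2 * a s))))
        D s := by
      have hRp : HasDerivWithinAt (fun u => R u ^ 3)
          (3 * R s ^ 2 * (-((n : ℝ) * ((n : ℝ) - 4)) / (R s ^ 2 * a s))) D s := by
        have := (hR s hs).fun_pow 3
        simpa using this
      exact (ha s hs).mul hRp
    have h2 : HasDerivWithinAt (fun u => c * u) c D s :=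
      by simpa using (hasDerivWithinAt_id s D).const_mul c
    have := h1.fun_add h2
    refine this.congr_deriv ?_
    field_simp [hc]
    ring
  have key : f t = f 0 := by
    have := hconv.norm_image_sub_le_of_norm_hasDerivWithin_le (C := 0) hderiv
      (fun x _ => by simp) h0 ht
    simp only [zero_mul] at this
    have : ‖f t - f 0‖ ≤ 0 := this
    have := norm_le_zero_iff.mp this
    linarith [sub_eq_zero.mp this]
  simp only [hf] at key
  simp only [hc] at key ⊢
  linarith
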